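/- arXiv:1406.3653 — 3 statements merged into one kernel-verified Lean document; each statement's English description precedes it below -/
import Mathlib

section
/- Let C_1,...,C_T : ℝ → ℝ be convex functions, let X = {x : -P_o ≤ x ≤ P_i}, ρ ∈ (0,1], and for a vector S = (S_0,...,S_T) define x_t(S) = S_t - ρ·S_{t-1}. Suppose S* satisfies the feasibility constraints (S*_0 and S*_T fixed, 0 ≤ S*_t ≤ E for 1 ≤ t ≤ T-1, and x_t(S*) ∈ X for all t), and suppose there exists μ* = (μ*_1,...,μ*_T) such that (i) for each t, x_t(S*) minimises C_t(x) - μ*_t·x over x ∈ X, and (ii) for 1 ≤ t ≤ T-1: ρ·μ*_{t+1} = μ*_t if 0 < S*_t < E, ρ·μ*_{t+1} ≤ μ*_t if S*_t = 0, and ρ·μ*_{t+1} ≥ μ*_t if S*_t = E. Then S* minimises ∑_{t=1}^T C_t(x_t(S)) over all feasible S with the same endpoints S_0 = S*_0 and S_T = S*_T. -/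
/-- Abel summation identity used in the storage problem. -/
lemma storage_abel_aux (μ D : ℕ → ℝ) (ρ : ℝ) :
    ∀ n : ℕ, ∑ i ∈ Finset.range (n + 1), μ (i + 1) * (D (i + 1) - ρ * D i)
      = μ (n + 1) * D (n + 1) - ρ * μ 1 * D 0
        + ∑ i ∈ Finset.range n, (μ (i + 1) - ρ * μ (i + 2)) * D (i + 1) := by
  intro n
  induction n with
  | zero => simp; ring
  | succ n ih =>
    rw [Finset.sum_range_succ, ih, Finset.sum_range_succ]
    ring

/-- Lagrangian sufficiency for the storage problem. -/
theorem storage_lagrangian_sufficiency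
    (T : ℕ) (hT : 1 ≤ T)
    (C : ℕ → ℝ → ℝ) (hC : ∀ t, ConvexOn ℝ Set.univ (C t))
    (Po Pi E ρ : ℝ) (hρ0 : 0 < ρ) (hρ1 : ρ ≤ 1)
    (Sstar μstar : ℕ → ℝ)
    -- (i) feasibility of S*
    (hfeas_cap : ∀ t, 1 ≤ t → t ≤ T - 1 → 0 ≤ Sstar t ∧ Sstar t ≤ E)
    (hfeas_rate : ∀ t, 1 ≤ t → t ≤ T →
      -Po ≤ Sstar t - ρ * Sstar (t - 1) ∧ Sstar t - ρ * Sstar (t - 1) ≤ Pi)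
    -- (ii) x_t(S*) minimises C_t(x) - μ*_t x over X
    (hmin : ∀ t, 1 ≤ t → t ≤ T → ∀ x, -Po ≤ x → x ≤ Pi →
      C t (Sstar t - ρ * Sstar (t - 1)) - μstar t * (Sstar t - ρ * Sstar (t - 1))
        ≤ C t x - μstar t * x)
    -- (iii) complementary slackness
    (hslack : ∀ t, 1 ≤ t → t ≤ T - 1 →
      ((0 < Sstar t ∧ Sstar t < E) → ρ * μstar (t + 1) = μstar t) ∧
      (Sstar t = 0 → ρ * μstar (t + 1) ≤ μstar t) ∧
      (Sstar t = E → ρ * μstar (t + 1) ≥ μstar t)) :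
    -- conclusion: S* minimises total cost among feasible S with the same endpoints
    ∀ S : ℕ → ℝ, S 0 = Sstar 0 → S T = Sstar T →
      (∀ t, 1 ≤ t → t ≤ T - 1 → 0 ≤ S t ∧ S t ≤ E) →
      (∀ t, 1 ≤ t → t ≤ T →
        -Po ≤ S t - ρ * S (t - 1) ∧ S t - ρ * S (t - 1) ≤ Pi) →
      ∑ t ∈ Finset.Icc 1 T, C t (Sstar t - ρ * Sstar (t - 1))
        ≤ ∑ t ∈ Finset.Icc 1 T, C t (S t - ρ * S (t - 1)) := by
  intro S hS0 hST hcap hrate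
  obtain ⟨n, rfl⟩ : ∃ n, T = n + 1 := ⟨T - 1, (Nat.succ_pred_eq_of_pos hT).symm⟩
  set D : ℕ → ℝ := fun t => S t - Sstar t with hD
  have hD0 : D 0 = 0 := by simp [hD, hS0]
  have hDT : D (n + 1) = 0 := by simp [hD, hST]
  -- the "multiplier" sum is nonnegative
  have hA : 0 ≤ ∑ t ∈ Finset.Icc 1 (n + 1), μstar t * (D t - ρ * D (t - 1)) := by
    have hIcc : Finset.Icc 1 (n + 1) = Finset.Ico 1 (n + 2) := by
      exact (Finset.Ico_add_one_right_eq_Icc 1 (n + 1)).symm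
    rw [hIcc, Finset.sum_Ico_eq_sum_range]
    have hrange : ∀ i ∈ Finset.range (n + 2 - 1),
        μstar (1 + i) * (D (1 + i) - ρ * D (1 + i - 1))
          = μstar (i + 1) * (D (i + 1) - ρ * D i) := by
      intro i _
      have h1 : 1 + i = i + 1 := by omega
      have h2 : 1 + i - 1 = i := by omega
      rw [h1]
      simp
    rw [Finset.sum_congr rfl hrange]
    have h3 : n + 2 - 1 = n + 1 := by omega
    rw [h3, storage_abel_aux μstar D ρ, hD0, hDT]
    have hterm : ∀ i ∈ Finset.range n,
        0 ≤ (μstar (i + 1) - ρ * μstar (i + 2)) * D (i + 1) := by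
      intro i hi
      have hin : i < n := Finset.mem_range.mp hi
      have ht1 : 1 ≤ i + 1 := by omega
      have ht2 : i + 1 ≤ (n + 1) - 1 := by omega
      have hc := hfeas_cap (i + 1) ht1 ht2
      have hc' := hcap (i + 1) ht1 ht2
      have hs := hslack (i + 1) ht1 ht2
      have hi2 : i + 1 + 1 = i + 2 := by omega
      rcases hc.1.lt_or_eq with h0 | h0
      · rcases hc.2.lt_or_eq with hE | hE
        · have := hs.1 ⟨h0, hE⟩
          rw [hi2] at this
          have : μstar (i + 1) - ρ * μstar (i + 2) = 0 := by linarith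
          rw [this, zero_mul]
        · have := hs.2.2 hE
          rw [hi2] at this
          have hDle : D (i + 1) ≤ 0 := by
            simp only [hD]
            linarith [hc'.2, hE]
          nlinarith [this, hDle]
      · have := hs.2.1 h0.symm
        rw [hi2] at this
        have hDge : 0 ≤ D (i + 1) := by
          simp only [hD]
          linarith [hc'.1, h0]
        exact mul_nonneg (by linarith) hDge
    have := Finset.sum_nonneg hterm
    linarith
  -- termwise Lagrangian bound
  have key : ∀ t ∈ Finset.Icc 1 (n + 1),
      C t (Sstar t - ρ * Sstar (t - 1))
        ≤ C t (S t - ρ * S (t - 1)) - μstar t * (D t - ρ * D (t - 1)) := by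
    intro t ht
    obtain ⟨ht1, ht2⟩ := Finset.mem_Icc.mp ht
    have hr := hrate t ht1 ht2
    have hm := hmin t ht1 ht2 (S t - ρ * S (t - 1)) hr.1 hr.2
    have hx : (S t - ρ * S (t - 1)) - (Sstar t - ρ * Sstar (t - 1))
        = D t - ρ * D (t - 1) := by simp [hD]; ring
    have hmul : μstar t * ((S t - ρ * S (t - 1)) - (Sstar t - ρ * Sstar (t - 1)))
        = μstar t * (D t - ρ * D (t - 1)) := by rw [← hx]
    have hms := mul_sub (μstar t) (S t - ρ * S (t - 1)) (Sstar t - ρ * Sstar (t - 1))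
    linarith [hm, hmul, hms]
  calc ∑ t ∈ Finset.Icc 1 (n + 1), C t (Sstar t - ρ * Sstar (t - 1))
      ≤ ∑ t ∈ Finset.Icc 1 (n + 1),
          (C t (S t - ρ * S (t - 1)) - μstar t * (D t - ρ * D (t - 1))) :=
        Finset.sum_le_sum key
    _ = ∑ t ∈ Finset.Icc 1 (n + 1), C t (S t - ρ * S (t - 1))
          - ∑ t ∈ Finset.Icc 1 (n + 1), μstar t * (D t - ρ * D (t - 1)) :=
        Finset.sum_sub_distrib _ _
    _ ≤ ∑ t ∈ Finset.Icc 1 (n + 1), C t (S t - ρ * S (t - 1)) := by linarith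
end

section
/- Suppose in Theorem on Lagrangian sufficiency the cost functions C_t are nondecreasing. If (S*, μ*) satisfies conditions (i)–(iii) of that theorem (feasibility; x_t(S*) minimises C_t(x) - μ*_t x over X; and the complementary slackness conditions ρμ*_{t+1} = μ*_t if 0 < S*_t < E, ρμ*_{t+1} ≤ μ*_t if S*_t = 0, ρμ*_{t+1} ≥ μ*_t if S*_t = E), then the pair (S*, max(μ*, 0)) (componentwise maximum with 0) also satisfies all three conditions. In particular the multiplier vector may be taken nonnegative. -/
/-- If the cost functions are nondecreasing, the multiplier vector in the Lagrangian
sufficiency theorem may be taken nonnegative: replacing μ* by max(μ*, 0) preserves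
conditions (i)–(iii). -/
theorem multiplier_may_be_taken_nonnegative
    (T : ℕ) (hT : 1 ≤ T)
    (C : ℕ → ℝ → ℝ) (hC : ∀ t, ConvexOn ℝ Set.univ (C t))
    (hCmono : ∀ t, Monotone (C t))
    (Po Pi E ρ : ℝ) (hρ0 : 0 < ρ) (hρ1 : ρ ≤ 1)
    (Sstar μstar : ℕ → ℝ)
    -- (i) feasibility of S*
    (hfeas_cap : ∀ t, 1 ≤ t → t ≤ T - 1 → 0 ≤ Sstar t ∧ Sstar t ≤ E)
    (hfeas_rate : ∀ t, 1 ≤ t → t ≤ T →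
      -Po ≤ Sstar t - ρ * Sstar (t - 1) ∧ Sstar t - ρ * Sstar (t - 1) ≤ Pi)
    -- (ii) minimisation property for μ*
    (hmin : ∀ t, 1 ≤ t → t ≤ T → ∀ x, -Po ≤ x → x ≤ Pi →
      C t (Sstar t - ρ * Sstar (t - 1)) - μstar t * (Sstar t - ρ * Sstar (t - 1))
        ≤ C t x - μstar t * x)
    -- (iii) complementary slackness for μ*
    (hslack : ∀ t, 1 ≤ t → t ≤ T - 1 →
      ((0 < Sstar t ∧ Sstar t < E) → ρ * μstar (t + 1) = μstar t) ∧
      (Sstar t = 0 → ρ * μstar (t + 1) ≤ μstar t) ∧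
      (Sstar t = E → ρ * μstar (t + 1) ≥ μstar t)) :
    -- the pair (S*, max(μ*,0)) satisfies the same three conditions
    ((∀ t, 1 ≤ t → t ≤ T - 1 → 0 ≤ Sstar t ∧ Sstar t ≤ E) ∧
     (∀ t, 1 ≤ t → t ≤ T →
       -Po ≤ Sstar t - ρ * Sstar (t - 1) ∧ Sstar t - ρ * Sstar (t - 1) ≤ Pi)) ∧
    (∀ t, 1 ≤ t → t ≤ T → ∀ x, -Po ≤ x → x ≤ Pi →
      C t (Sstar t - ρ * Sstar (t - 1))
          - max (μstar t) 0 * (Sstar t - ρ * Sstar (t - 1))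
        ≤ C t x - max (μstar t) 0 * x) ∧
    (∀ t, 1 ≤ t → t ≤ T - 1 →
      ((0 < Sstar t ∧ Sstar t < E) → ρ * max (μstar (t + 1)) 0 = max (μstar t) 0) ∧
      (Sstar t = 0 → ρ * max (μstar (t + 1)) 0 ≤ max (μstar t) 0) ∧
      (Sstar t = E → ρ * max (μstar (t + 1)) 0 ≥ max (μstar t) 0)) := by

  refine ⟨⟨hfeas_cap, hfeas_rate⟩, ?_, ?_⟩
  · intro t ht1 htT x hx1 hx2
    rcases le_or_gt 0 (μstar t) with hμ | hμ
    · rw [max_eq_left hμ]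
      exact hmin t ht1 htT x hx1 hx2
    · rw [max_eq_right hμ.le]
      simp only [zero_mul, sub_zero]
      set d := Sstar t - ρ * Sstar (t - 1) with hd
      rcases le_or_gt d x with h | h
      · exact hCmono t h
      · have := hmin t ht1 htT x hx1 hx2
        nlinarith [this]
  · intro t ht1 htT
    obtain ⟨h1, h2, h3⟩ := hslack t ht1 htT
    refine ⟨?_, ?_, ?_⟩
    · intro h
      have he := h1 h
      rcases le_or_gt 0 (μstar (t + 1)) with ha | ha
      · rw [max_eq_left ha, max_eq_left (he ▸ mul_nonneg hρ0.le ha)]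
        exact he
      · rw [max_eq_right ha.le, max_eq_right]
        · ring
        · nlinarith
    · intro h
      have he := h2 h
      calc ρ * max (μstar (t + 1)) 0 = max (ρ * μstar (t + 1)) (ρ * 0) :=
            (mul_max_of_nonneg _ _ hρ0.le)
        _ ≤ max (μstar t) 0 := by
            rw [mul_zero]; exact max_le_max he le_rfl
    · intro h
      have he := h3 h
      calc max (μstar t) 0 ≤ max (ρ * μstar (t + 1)) (ρ * 0) := by
            rw [mul_zero]; exact max_le_max he le_rfl
        _ = ρ * max (μstar (t + 1)) 0 := (mul_max_of_nonneg _ _ hρ0.le).symm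
end

section
/- Corollary of the martingale scaling result: under the hypotheses of the martingale cost-scaling theorem with ξ_0 = 1 (or F_0 trivial and E[ξ_1] = 1), the optimal value of the stochastic storage problem equals the optimal value of the deterministic problem with cost functions C̄_t, and the deterministic optimal sequence of store levels is optimal for the stochastic problem. -/
open MeasureTheory

/-- Corollary of the martingale cost-scaling theorem: with ξ₀ = 1, the optimal value
of the stochastic storage problem equals the deterministic optimal value, and the
deterministic optimal sequence of store levels is optimal for the stochastic problem. -/
theorem martingale_scaling_corollary
    {Ω : Type*} {m0 : MeasurableSpace Ω} (P : Measure Ω) [IsProbabilityMeasure P]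
    (ℱ : Filtration ℕ m0)
    (ξ : ℕ → Ω → ℝ) (hmart : Martingale ξ ℱ P)
    (hpos : ∀ t, ∀ᵐ ω ∂P, 0 < ξ t ω)
    (hξ0 : ξ 0 =ᵐ[P] fun _ => 1)
    (T : ℕ) (hT : 1 ≤ T)
    (Cbar : ℕ → ℝ → ℝ) (hCbar : ∀ t, ConvexOn ℝ Set.univ (Cbar t))
    (Po Pi E ρ S0 ST : ℝ) (hρ0 : 0 < ρ) (hρ1 : ρ ≤ 1) (hE : 0 < E)
    -- Sbar is an optimal solution of the deterministic problem (costs C̄_t)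
    (Sbar : ℕ → ℝ)
    (hSbar0 : Sbar 0 = S0) (hSbarT : Sbar T = ST)
    (hSbarcap : ∀ t, 1 ≤ t → t ≤ T - 1 → 0 ≤ Sbar t ∧ Sbar t ≤ E)
    (hSbarrate : ∀ t, 1 ≤ t → t ≤ T →
      -Po ≤ Sbar t - ρ * Sbar (t - 1) ∧ Sbar t - ρ * Sbar (t - 1) ≤ Pi)
    (hSbarmin : ∀ S' : ℕ → ℝ, S' 0 = S0 → S' T = ST →
      (∀ t, 1 ≤ t → t ≤ T - 1 → 0 ≤ S' t ∧ S' t ≤ E) →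
      (∀ t, 1 ≤ t → t ≤ T →
        -Po ≤ S' t - ρ * S' (t - 1) ∧ S' t - ρ * S' (t - 1) ≤ Pi) →
      ∑ t ∈ Finset.Icc 1 T, Cbar t (Sbar t - ρ * Sbar (t - 1))
        ≤ ∑ t ∈ Finset.Icc 1 T, Cbar t (S' t - ρ * S' (t - 1))) :
    -- (a) the stochastic cost of the deterministic optimal strategy equals the
    --     deterministic optimal value
    (∫ ω, ∑ t ∈ Finset.Icc 1 T, ξ t ω * Cbar t (Sbar t - ρ * Sbar (t - 1)) ∂P
        = ∑ t ∈ Finset.Icc 1 T, Cbar t (Sbar t - ρ * Sbar (t - 1))) ∧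
    -- (b) no adapted feasible strategy does better
    (∀ S : ℕ → Ω → ℝ, Adapted ℱ S →
      (∀ᵐ ω ∂P, S 0 ω = S0 ∧ S T ω = ST ∧
        (∀ t, 1 ≤ t → t ≤ T - 1 → 0 ≤ S t ω ∧ S t ω ≤ E) ∧
        (∀ t, 1 ≤ t → t ≤ T →
          -Po ≤ S t ω - ρ * S (t - 1) ω ∧ S t ω - ρ * S (t - 1) ω ≤ Pi)) →
      Integrable (fun ω =>
        ∑ t ∈ Finset.Icc 1 T, ξ t ω * Cbar t (S t ω - ρ * S (t - 1) ω)) P →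
      ∑ t ∈ Finset.Icc 1 T, Cbar t (Sbar t - ρ * Sbar (t - 1))
        ≤ ∫ ω, ∑ t ∈ Finset.Icc 1 T, ξ t ω * Cbar t (S t ω - ρ * S (t - 1) ω) ∂P) := by
  classical
  have hξsm : ∀ t, StronglyMeasurable (ξ t) :=
    fun t => (hmart.stronglyAdapted t).mono (ℱ.le t)
  have hξint : ∀ t, Integrable (ξ t) P := hmart.integrable
  have hξnn : ∀ t, 0 ≤ᵐ[P] ξ t := fun t => (hpos t).mono fun ω h => h.le
  have hEξ : ∀ t, ∫ ω, ξ t ω ∂P = 1 := by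
    intro t
    have h1 := hmart.condExp_ae_eq (Nat.zero_le t)
    have h2 : ∫ ω, (P[ξ t | ℱ 0]) ω ∂P = ∫ ω, ξ t ω ∂P :=
      integral_condExp (ℱ.le 0)
    have h3 : ∫ ω, (P[ξ t | ℱ 0]) ω ∂P = ∫ ω, ξ 0 ω ∂P := integral_congr_ae h1
    have h4 : ∫ ω, ξ 0 ω ∂P = 1 := by
      rw [integral_congr_ae hξ0]; simp
    rw [← h2, h3, h4]
  have hcont : ∀ t, Continuous (Cbar t) := by
    intro t
    rw [← continuousOn_univ]
    exact (hCbar t).continuousOn isOpen_univ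
  constructor
  · -- part (a)
    rw [integral_finset_sum _ (fun t _ => (hξint t).mul_const _)]
    refine Finset.sum_congr rfl fun t _ => ?_
    rw [integral_mul_const, hEξ t, one_mul]
  · -- part (b)
    intro S hadapt hfeas hint
    clear hint
    set c : ℝ := |S0| + |ST| + E with hc
    have hcE : E ≤ c := by
      have := abs_nonneg S0; have := abs_nonneg ST; linarith
    have hSsm : ∀ t, StronglyMeasurable (S t) :=
      fun t => ((hadapt t).mono (ℱ.le t) le_rfl).stronglyMeasurable
    have hSbound : ∀ t, t ≤ T → ∀ᵐ ω ∂P, |S t ω| ≤ c := by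
      intro t ht
      filter_upwards [hfeas] with ω hω
      obtain ⟨h0, hT', hcap, _⟩ := hω
      rcases eq_or_ne t 0 with rfl | ht0
      · rw [h0]; have := abs_nonneg ST; linarith
      rcases eq_or_ne t T with rfl | htT
      · rw [hT']; have := abs_nonneg S0; linarith
      · have h1 : 1 ≤ t := Nat.one_le_iff_ne_zero.2 ht0
        have h2 : t ≤ T - 1 := by omega
        obtain ⟨hl, hu⟩ := hcap t h1 h2
        rw [abs_le]
        have := abs_nonneg S0; have := abs_nonneg ST
        constructor <;> linarith
    have hprod : ∀ t, t ≤ T → Integrable (fun ω => ξ t ω * S t ω) P := by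
      intro t ht
      refine Integrable.mono' ((hξint t).const_mul c)
        ((hξsm t).mul (hSsm t)).aestronglyMeasurable ?_
      filter_upwards [hpos t, hSbound t ht] with ω h1 h2
      rw [Real.norm_eq_abs, abs_mul, abs_of_pos h1]
      exact mul_le_mul_of_nonneg_left h2 h1.le |>.trans_eq (mul_comm _ _)
    have hprodmix : ∀ t, 1 ≤ t → t ≤ T →
        Integrable (fun ω => ξ t ω * S (t - 1) ω) P := by
      intro t h1 ht
      refine Integrable.mono' ((hξint t).const_mul c)
        ((hξsm t).mul (hSsm (t - 1))).aestronglyMeasurable ?_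
      filter_upwards [hpos t, hSbound (t - 1) (by omega)] with ω hp hb
      rw [Real.norm_eq_abs, abs_mul, abs_of_pos hp]
      exact mul_le_mul_of_nonneg_left hb hp.le |>.trans_eq (mul_comm _ _)
    have hkey : ∀ t, 1 ≤ t → t ≤ T →
        ∫ ω, ξ t ω * S (t - 1) ω ∂P = ∫ ω, ξ (t - 1) ω * S (t - 1) ω ∂P := by
      intro t h1 ht
      have hgm : StronglyMeasurable[ℱ (t - 1)] (S (t - 1)) := (hadapt (t - 1)).stronglyMeasurable
      have hbd : ∀ᵐ ω ∂P, ‖S (t - 1) ω‖ ≤ c := by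
        filter_upwards [hSbound (t - 1) (by omega)] with ω hb
        rwa [Real.norm_eq_abs]
      have hmul := condExp_stronglyMeasurable_mul_of_bound (ℱ.le (t - 1)) hgm (hξint t) c hbd
      have hintmul : Integrable (S (t - 1) * ξ t) P :=
        ((hprodmix t h1 ht).congr (ae_of_all _ fun ω => mul_comm _ _))
      have hstep : (fun ω => (S (t-1) * P[ξ t | ℱ (t-1)]) ω) =ᵐ[P]
          fun ω => ξ (t - 1) ω * S (t - 1) ω := by
        filter_upwards [hmart.condExp_ae_eq (Nat.sub_le t 1)] with ω hω
        show S (t-1) ω * (P[ξ t | ℱ (t-1)]) ω = ξ (t - 1) ω * S (t - 1) ω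
        rw [hω, mul_comm]
      calc ∫ ω, ξ t ω * S (t - 1) ω ∂P
          = ∫ ω, (S (t - 1) * ξ t) ω ∂P := by
            refine integral_congr_ae (ae_of_all _ fun ω => ?_)
            show ξ t ω * S (t-1) ω = S (t-1) ω * ξ t ω
            rw [mul_comm]
        _ = ∫ ω, (P[S (t - 1) * ξ t | ℱ (t - 1)]) ω ∂P :=
            (integral_condExp (ℱ.le (t - 1)) (f := S (t-1) * ξ t)).symm
        _ = ∫ ω, ξ (t - 1) ω * S (t - 1) ω ∂P :=
            integral_congr_ae (hmul.trans hstep)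
    have hprodΔ : ∀ t, 1 ≤ t → t ≤ T →
        Integrable (fun ω => ξ t ω * (S t ω - ρ * S (t - 1) ω)) P := by
      intro t h1 ht
      exact ((hprod t ht).sub ((hprodmix t h1 ht).const_mul ρ)).congr
        (ae_of_all _ fun ω => by simp only [_root_.Pi.sub_apply]; ring)
    set S' : ℕ → ℝ := fun t => ∫ ω, ξ t ω * S t ω ∂P with hS'
    set m : ℕ → ℝ := fun t => ∫ ω, ξ t ω * (S t ω - ρ * S (t - 1) ω) ∂P with hm
    have hmrate : ∀ t, 1 ≤ t → t ≤ T → S' t - ρ * S' (t - 1) = m t := by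
      intro t h1 ht
      have : m t = ∫ ω, (ξ t ω * S t ω - ρ * (ξ t ω * S (t - 1) ω)) ∂P := by
        refine integral_congr_ae (ae_of_all _ fun ω => ?_); ring
      rw [this, integral_sub (hprod t ht) ((hprodmix t h1 ht).const_mul ρ),
        integral_const_mul, hkey t h1 ht]
    have hS'0 : S' 0 = S0 := by
      have : (fun ω => ξ 0 ω * S 0 ω) =ᵐ[P] fun _ => S0 := by
        filter_upwards [hξ0, hfeas] with ω h1 h2
        rw [h1, h2.1, one_mul]
      simp only [hS']
      rw [integral_congr_ae this, integral_const]; simp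
    have hS'T : S' T = ST := by
      have : (fun ω => ξ T ω * S T ω) =ᵐ[P] fun ω => ξ T ω * ST := by
        filter_upwards [hfeas] with ω h2
        rw [h2.2.1]
      simp only [hS']
      rw [integral_congr_ae this, integral_mul_const, hEξ T, one_mul]
    have hS'cap : ∀ t, 1 ≤ t → t ≤ T - 1 → 0 ≤ S' t ∧ S' t ≤ E := by
      intro t h1 h2
      have ht : t ≤ T := by omega
      constructor
      · refine integral_nonneg_of_ae ?_
        filter_upwards [hpos t, hfeas] with ω hp hf
        exact mul_nonneg hp.le (hf.2.2.1 t h1 h2).1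
      · have hle : S' t ≤ ∫ ω, ξ t ω * E ∂P := by
          refine integral_mono_ae (hprod t ht) ((hξint t).mul_const E) ?_
          filter_upwards [hpos t, hfeas] with ω hp hf
          exact mul_le_mul_of_nonneg_left (hf.2.2.1 t h1 h2).2 hp.le
        rwa [integral_mul_const, hEξ t, one_mul] at hle
    have hmlow : ∀ t, 1 ≤ t → t ≤ T → -Po ≤ m t ∧ m t ≤ Pi := by
      intro t h1 ht
      constructor
      · have hle : ∫ ω, ξ t ω * (-Po) ∂P ≤ m t := by
          refine integral_mono_ae ((hξint t).mul_const _) (hprodΔ t h1 ht) ?_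
          filter_upwards [hpos t, hfeas] with ω hp hf
          exact mul_le_mul_of_nonneg_left (hf.2.2.2 t h1 ht).1 hp.le
        rwa [integral_mul_const, hEξ t, one_mul] at hle
      · have hle : m t ≤ ∫ ω, ξ t ω * Pi ∂P := by
          refine integral_mono_ae (hprodΔ t h1 ht) ((hξint t).mul_const _) ?_
          filter_upwards [hpos t, hfeas] with ω hp hf
          exact mul_le_mul_of_nonneg_left (hf.2.2.2 t h1 ht).2 hp.le
        rwa [integral_mul_const, hEξ t, one_mul] at hle
    have hS'rate : ∀ t, 1 ≤ t → t ≤ T →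
        -Po ≤ S' t - ρ * S' (t - 1) ∧ S' t - ρ * S' (t - 1) ≤ Pi := by
      intro t h1 ht
      rw [hmrate t h1 ht]
      exact hmlow t h1 ht
    -- Jensen's inequality for each t
    have hJensen : ∀ t, 1 ≤ t → t ≤ T →
        Cbar t (m t) ≤ ∫ ω, ξ t ω * Cbar t (S t ω - ρ * S (t - 1) ω) ∂P := by
      intro t h1 ht
      set Δ : Ω → ℝ := fun ω => S t ω - ρ * S (t - 1) ω with hΔ
      have hΔsm : StronglyMeasurable Δ := (hSsm t).sub ((hSsm (t - 1)).const_mul ρ)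
      have hfmeas : Measurable fun ω => Real.toNNReal (ξ t ω) :=
        (hξsm t).measurable.real_toNNReal
      set ν : Measure Ω := P.withDensity (fun ω => (Real.toNNReal (ξ t ω) : ENNReal)) with hν
      have hconv : ∀ g : Ω → ℝ, ∫ ω, g ω ∂ν = ∫ ω, ξ t ω * g ω ∂P := by
        intro g
        rw [hν, integral_withDensity_eq_integral_smul hfmeas g]
        refine integral_congr_ae ?_
        filter_upwards [hpos t] with ω hω
        rw [NNReal.smul_def, Real.coe_toNNReal _ hω.le, smul_eq_mul]
      have hνprob : IsProbabilityMeasure ν := by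
        constructor
        rw [hν, withDensity_apply _ MeasurableSet.univ, setLIntegral_univ]
        have : ∫⁻ ω, (Real.toNNReal (ξ t ω) : ENNReal) ∂P
            = ∫⁻ ω, ENNReal.ofReal (ξ t ω) ∂P := rfl
        rw [this, ← ofReal_integral_eq_lintegral_ofReal (hξint t) (hξnn t), hEξ t,
          ENNReal.ofReal_one]
      have habs : ν ≪ P := withDensity_absolutelyContinuous _ _
      have hmemP : ∀ᵐ ω ∂P, Δ ω ∈ Set.Icc (-Po) Pi := by
        filter_upwards [hfeas] with ω hf
        exact ⟨(hf.2.2.2 t h1 ht).1, (hf.2.2.2 t h1 ht).2⟩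
      have hmem : ∀ᵐ ω ∂ν, Δ ω ∈ Set.Icc (-Po) Pi := habs.ae_le hmemP
      have hΔint : Integrable Δ ν := by
        refine ⟨hΔsm.aestronglyMeasurable, HasFiniteIntegral.of_bounded (C := max Po Pi) ?_⟩
        filter_upwards [hmem] with ω hω
        rw [Real.norm_eq_abs, abs_le]
        exact ⟨neg_le_neg (le_max_left _ _) |>.trans hω.1, hω.2.trans (le_max_right _ _)⟩
      obtain ⟨M, hM⟩ := (isCompact_Icc (a := -Po) (b := Pi)).exists_bound_of_continuousOn
        (hcont t).continuousOn
      have hCint : Integrable (Cbar t ∘ Δ) ν := by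
        refine ⟨((hcont t).comp_stronglyMeasurable hΔsm).aestronglyMeasurable,
          HasFiniteIntegral.of_bounded (C := M) ?_⟩
        filter_upwards [hmem] with ω hω
        exact hM _ hω
      have hjen := (((hCbar t).subset (Set.subset_univ _) (convex_Icc _ _)).map_integral_le
        (μ := ν) (hcont t).continuousOn isClosed_Icc hmem hΔint hCint)
      rw [hconv Δ, hconv (fun ω => Cbar t (Δ ω))] at hjen
      exact hjen
    -- integrability of each summand for the final step
    have hsummand : ∀ t, 1 ≤ t → t ≤ T →
        Integrable (fun ω => ξ t ω * Cbar t (S t ω - ρ * S (t - 1) ω)) P := by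
      intro t h1 ht
      obtain ⟨M, hM⟩ := (isCompact_Icc (a := -Po) (b := Pi)).exists_bound_of_continuousOn
        (hcont t).continuousOn
      have hΔsm : StronglyMeasurable fun ω => S t ω - ρ * S (t - 1) ω :=
        (hSsm t).sub ((hSsm (t - 1)).const_mul ρ)
      refine Integrable.mono' ((hξint t).const_mul M)
        ((hξsm t).mul ((hcont t).comp_stronglyMeasurable hΔsm)).aestronglyMeasurable ?_
      filter_upwards [hpos t, hfeas] with ω hp hf
      rw [Real.norm_eq_abs, abs_mul, abs_of_pos hp]
      have hmem : S t ω - ρ * S (t - 1) ω ∈ Set.Icc (-Po) Pi :=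
        ⟨(hf.2.2.2 t h1 ht).1, (hf.2.2.2 t h1 ht).2⟩
      have := hM _ hmem
      rw [Real.norm_eq_abs] at this
      calc ξ t ω * |Cbar t (S t ω - ρ * S (t - 1) ω)| ≤ ξ t ω * M :=
            mul_le_mul_of_nonneg_left this hp.le
        _ = M * ξ t ω := mul_comm _ _
    calc ∑ t ∈ Finset.Icc 1 T, Cbar t (Sbar t - ρ * Sbar (t - 1))
        ≤ ∑ t ∈ Finset.Icc 1 T, Cbar t (S' t - ρ * S' (t - 1)) :=
          hSbarmin S' hS'0 hS'T hS'cap hS'rate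
      _ = ∑ t ∈ Finset.Icc 1 T, Cbar t (m t) := by
          refine Finset.sum_congr rfl fun t htm => ?_
          rw [Finset.mem_Icc] at htm
          rw [hmrate t htm.1 htm.2]
      _ ≤ ∑ t ∈ Finset.Icc 1 T, ∫ ω, ξ t ω * Cbar t (S t ω - ρ * S (t - 1) ω) ∂P := by
          refine Finset.sum_le_sum fun t htm => ?_
          rw [Finset.mem_Icc] at htm
          exact hJensen t htm.1 htm.2
      _ = ∫ ω, ∑ t ∈ Finset.Icc 1 T, ξ t ω * Cbar t (S t ω - ρ * S (t - 1) ω) ∂P := by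
          rw [integral_finset_sum]
          intro t htm
          rw [Finset.mem_Icc] at htm
          exact hsummand t htm.1 htm.2
end
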